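/- Let V be a vertex type, E : V → V → Prop an edge relation, and s, e ∈ V vertices such that every vertex v ≠ s has an in-neighbor (some x with E x v) and every vertex v ≠ e has an out-neighbor (some y with E v y). Then every prime path p of (V, E) that is not closed satisfies both of the following: its first vertex u is equal to s or lies on a cycle (Relation.TransGen E u u), and its last vertex w is equal to e or lies on a cycle (Relation.TransGen E w w). -/

import Mathlib

/-- A (directed) path in the graph `(V, E)`: a nonempty list of vertices in which
consecutive vertices are related by the edge relation `E`. -/
def IsPath {V : Type*} (E : V → V → Prop) (l : List V) : Prop :=
  l ≠ [] ∧ l.Chain' E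

/-- A simple path: a path in which no vertex occurs more than once,
except that the first and last vertices may coincide. -/
def IsSimplePath {V : Type*} (E : V → V → Prop) (l : List V) : Prop :=
  IsPath E l ∧ l.dropLast.Nodup ∧ l.tail.Nodup

/-- A closed path: it has at least two vertices and its first and last vertices coincide. -/
def IsClosedPath {V : Type*} (l : List V) : Prop :=
  2 ≤ l.length ∧ l.head? = l.getLast?

/-- A prime path: a maximal simple path, i.e. a simple path that is not a proper
subpath (contiguous sublist) of any simple path. -/
def IsPrimePath {V : Type*} (E : V → V → Prop) (l : List V) : Prop :=
  IsSimplePath E l ∧ ∀ q : List V, IsSimplePath E q → l <:+: q → l = q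

lemma head_reaches {V : Type*} {E : V → V → Prop} :
    ∀ (l : List V), l.Chain' E → ∀ u, l.head? = some u → ∀ b ∈ l, Relation.ReflTransGen E u b := by
  intro l
  induction l with
  | nil => intro _ u hu; simp at hu
  | cons a t ih =>
    intro hc u hu b hb
    simp at hu; subst hu
    rcases List.mem_cons.mp hb with h | hb
    · subst h; exact .refl
    · match t, hb with
      | c :: t', hb =>
        rw [List.Chain', List.isChain_cons_cons] at hc
        exact (Relation.ReflTransGen.single hc.1).trans (ih hc.2 c rfl b hb)

lemma reaches_last {V : Type*} {E : V → V → Prop} :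
    ∀ (l : List V), l.Chain' E → ∀ w, l.getLast? = some w → ∀ b ∈ l, Relation.ReflTransGen E b w := by
  intro l
  induction l with
  | nil => intro _ w hw; simp at hw
  | cons a t ih =>
    intro hc w hw b hb
    match t with
    | [] => simp at hw hb; subst hw; subst hb; exact .refl
    | c :: t' =>
      rw [List.Chain', List.isChain_cons_cons] at hc
      rw [List.getLast?_cons_cons] at hw
      rcases List.mem_cons.mp hb with h | hb
      · subst h
        exact (Relation.ReflTransGen.single hc.1).trans (ih hc.2 w hw c (by simp))
      · exact ih hc.2 w hw b hb

lemma nodup_of_simple_not_closed {V : Type*} {E : V → V → Prop} {p : List V}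
    (hsp : IsSimplePath E p) (hnc : ¬ IsClosedPath p) : p.Nodup := by
  obtain ⟨⟨hne, _⟩, hdl, htl⟩ := hsp
  match p, hne with
  | [a], _ => simp
  | a :: b :: t, _ =>
    simp only [List.tail_cons] at htl
    have hlen : 2 ≤ (a :: b :: t).length := by simp
    have hhl : (a :: b :: t).head? ≠ (a :: b :: t).getLast? := fun h => hnc ⟨hlen, h⟩
    refine List.nodup_cons.mpr ⟨?_, htl⟩
    intro ha
    -- a ∈ b :: t, a ≠ last
    have hlast : (b :: t).getLast (by simp) ≠ a := by
      intro h
      apply hhl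
      rw [List.head?_cons, List.getLast?_cons_cons,
        List.getLast?_eq_getLast (l := b::t) (by simp), h]
    have : a ∈ (b :: t).dropLast := by
      have := (List.dropLast_append_getLast (l := b :: t) (by simp)).symm
      rw [this] at ha
      rcases List.mem_append.mp ha with h | h
      · exact h
      · simp at h; exact absurd h.symm hlast
    have hdl' : (a :: (b :: t).dropLast).Nodup := by
      have : (a :: b :: t).dropLast = a :: (b :: t).dropLast := by
        rw [List.dropLast_cons_of_ne_nil (by simp)]
      rwa [this] at hdl
    exact (List.nodup_cons.mp hdl').1 this

/-- Suppose every vertex other than `s` has an in-neighbor and every vertex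
other than `e` has an out-neighbor. Then the first vertex of any non-closed
prime path equals `s` or lies on a cycle, and its last vertex equals `e` or
lies on a cycle. -/
theorem primePath_endpoints_classification {V : Type*} (E : V → V → Prop)
    (s e : V)
    (hs : ∀ v : V, v ≠ s → ∃ x : V, E x v)
    (he : ∀ v : V, v ≠ e → ∃ y : V, E v y)
    (p : List V) (hp : IsPrimePath E p) (hnc : ¬ IsClosedPath p) :
    (∀ u : V, p.head? = some u → u = s ∨ Relation.TransGen E u u) ∧
    (∀ w : V, p.getLast? = some w → w = e ∨ Relation.TransGen E w w) := by
  obtain ⟨hsp, hmax⟩ := hp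
  have hnd : p.Nodup := nodup_of_simple_not_closed hsp hnc
  obtain ⟨⟨hne, hch⟩, hdl, htl⟩ := hsp
  constructor
  · intro u hu
    by_cases hus : u = s
    · exact Or.inl hus
    right
    obtain ⟨x, hx⟩ := hs u hus
    have hqch : (x :: p).Chain' E := by
      rw [List.Chain', List.isChain_cons]
      refine ⟨?_, hch⟩
      intro b hb
      rw [hu] at hb
      simp at hb; subst hb; exact hx
    by_cases hxp : x ∈ p.dropLast
    · have hxmem : x ∈ p := (List.dropLast_sublist p).mem hxp
      exact Relation.TransGen.tail' (head_reaches p hch u hu x hxmem) hx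
    · exfalso
      have hsq : IsSimplePath E (x :: p) := by
        refine ⟨⟨by simp, hqch⟩, ?_, ?_⟩
        · rw [List.dropLast_cons_of_ne_nil hne]
          exact List.nodup_cons.mpr ⟨hxp, hdl⟩
        · simpa using hnd
      have := hmax (x :: p) hsq (List.infix_cons (List.infix_refl p))
      exact absurd (congrArg List.length this) (by simp)
  · intro w hw
    by_cases hwe : w = e
    · exact Or.inl hwe
    right
    obtain ⟨y, hy⟩ := he w hwe
    have hqch : (p ++ [y]).Chain' E := by
      rw [List.Chain', List.isChain_append]
      refine ⟨hch, by simp, ?_⟩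
      intro a ha b hb
      rw [hw] at ha
      simp at ha hb; subst ha; subst hb; exact hy
    by_cases hyp : y ∈ p.tail
    · have hymem : y ∈ p := List.tail_sublist p |>.mem hyp
      exact Relation.TransGen.head' hy (reaches_last p hch w hw y hymem)
    · exfalso
      have hsq : IsSimplePath E (p ++ [y]) := by
        refine ⟨⟨by simp, hqch⟩, ?_, ?_⟩
        · rw [List.dropLast_concat]
          exact hnd
        · match p, hne with
          | a :: t, _ =>
            simp only [List.cons_append, List.tail_cons]
            rw [List.nodup_append]
            refine ⟨htl, by simp, ?_⟩
            simp only [List.tail_cons] at hyp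
            simp [List.Disjoint]
            intro c hc h; subst h; exact hyp hc
      have := hmax (p ++ [y]) hsq ((List.prefix_append p [y]).isInfix)
      exact absurd (congrArg List.length this) (by simp)
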